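/- Let d ≥ 1, n ≥ 1 and let y_1, …, y_n ∈ ℝ^d be pairwise distinct with Σ_{j=1}^n ‖y_j‖² = n d. For a > 0, define T(a) = n (π/(a+1))^{d/2} · d/(2(a+1)) − 2 (2π/(2a+1))^{d/2} Σ_{j=1}^n (‖y_j‖²/(2a+1)) exp(−‖y_j‖²/(4a+2)) + (1/n) (π/a)^{d/2} Σ_{i,j=1}^n y_iᵀ y_j exp(−‖y_i − y_j‖²/(4a)). Then lim_{a→0⁺} (1/(n a^{d/2})) ( (a/π)^{d/2} T(a) − d ) = d/2 − 2^{d/2+1} (1/n) Σ_{j=1}^n ‖y_j‖² exp(−‖y_j‖²/2). -/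

import Mathlib

open MeasureTheory Real Filter

/-- Closed form of the weighted `L²`-test statistic `T_{n,a}` for the points
`y 1, …, y n ∈ ℝ^d` and weight parameter `a`. -/
noncomputable def Tstat (d n : ℕ) (y : Fin n → EuclideanSpace ℝ (Fin d)) (a : ℝ) : ℝ :=
  (n : ℝ) * (π / (a + 1)) ^ ((d : ℝ) / 2) * ((d : ℝ) / (2 * (a + 1)))
    - 2 * (2 * π / (2 * a + 1)) ^ ((d : ℝ) / 2)
        * ∑ j, ‖y j‖ ^ 2 / (2 * a + 1) * Real.exp (-‖y j‖ ^ 2 / (4 * a + 2))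
    + (n : ℝ)⁻¹ * (π / a) ^ ((d : ℝ) / 2)
        * ∑ i, ∑ j, (inner ℝ (y i) (y j) : ℝ) * Real.exp (-‖y i - y j‖ ^ 2 / (4 * a))

lemma aux_vanish (c p : ℝ) (hc : 0 < c) :
    Tendsto (fun a : ℝ => a ^ (-p) * Real.exp (-c / (4 * a)))
      (nhdsWithin 0 (Set.Ioi 0)) (nhds 0) := by
  have h1 : Tendsto (fun x : ℝ => x ^ p * Real.exp (-(c / 4) * x)) atTop (nhds 0) :=
    tendsto_rpow_mul_exp_neg_mul_atTop_nhds_zero p (c / 4) (by positivity)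
  have h2 := h1.comp tendsto_inv_nhdsGT_zero
  refine h2.congr' ?_
  filter_upwards [self_mem_nhdsWithin] with a (ha : 0 < a)
  have hne : a ≠ 0 := ne_of_gt ha
  simp only [Function.comp]
  rw [Real.inv_rpow ha.le, ← Real.rpow_neg ha.le]
  congr 1
  field_simp

/-- Theorem 2.4. For pairwise distinct points with
`∑ ‖y_j‖² = n d`, as `a → 0⁺`,
`(n a^{d/2})⁻¹ ( (a/π)^{d/2} T_{n,a} - d ) → d/2 - 2^{d/2+1} n⁻¹ ∑ ‖y_j‖² e^{-‖y_j‖²/2}`. -/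
theorem Tstat_tendsto_kurtosis_zero
    (d n : ℕ) (hd : 1 ≤ d) (hn : 1 ≤ n) (y : Fin n → EuclideanSpace ℝ (Fin d))
    (hdistinct : Function.Injective y)
    (hnorm : ∑ j, ‖y j‖ ^ 2 = (n : ℝ) * d) :
    Tendsto (fun a : ℝ =>
        ((n : ℝ) * a ^ ((d : ℝ) / 2))⁻¹ * ((a / π) ^ ((d : ℝ) / 2) * Tstat d n y a - d))
      (nhdsWithin 0 (Set.Ioi 0))
      (nhds ((d : ℝ) / 2 -
        2 ^ ((d : ℝ) / 2 + 1) * ((n : ℝ)⁻¹ *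
          ∑ j, ‖y j‖ ^ 2 * Real.exp (-‖y j‖ ^ 2 / 2)))) := by
  set p : ℝ := (d : ℝ) / 2 with hp
  have hnR : (0 : ℝ) < n := by exact_mod_cast hn
  have hnne : (n : ℝ) ≠ 0 := ne_of_gt hnR
  set A : ℝ → ℝ := fun a => (a + 1) ^ (-p) * ((d : ℝ) / (2 * (a + 1))) with hA
  set B : ℝ → ℝ := fun a => 2 ^ p * (2 * a + 1) ^ (-p) * (2 / (n : ℝ)) *
      ∑ j, ‖y j‖ ^ 2 / (2 * a + 1) * Real.exp (-‖y j‖ ^ 2 / (4 * a + 2)) with hB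
  set C : ℝ → ℝ := fun a => ((n : ℝ) * n)⁻¹ *
      ∑ i, ∑ j, (if i = j then 0 else
        (inner ℝ (y i) (y j) : ℝ) * (a ^ (-p) * Real.exp (-‖y i - y j‖ ^ 2 / (4 * a)))) with hC
  have heq : ∀ a ∈ Set.Ioi (0 : ℝ),
      ((n : ℝ) * a ^ p)⁻¹ * ((a / π) ^ p * Tstat d n y a - d) = A a - B a + C a := by
    intro a ha
    have ha : (0 : ℝ) < a := ha
    have ha1 : (0 : ℝ) < a + 1 := by linarith
    have ha2 : (0 : ℝ) < 2 * a + 1 := by linarith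
    have hπ : (0 : ℝ) < π := Real.pi_pos
    have hS2 : (∑ i, ∑ j, (inner ℝ (y i) (y j) : ℝ) * Real.exp (-‖y i - y j‖ ^ 2 / (4 * a)))
        = (n : ℝ) * d + ∑ i, ∑ j, (if i = j then 0 else
            (inner ℝ (y i) (y j) : ℝ) * Real.exp (-‖y i - y j‖ ^ 2 / (4 * a))) := by
      have key : ∀ i : Fin n,
          (∑ j, (inner ℝ (y i) (y j) : ℝ) * Real.exp (-‖y i - y j‖ ^ 2 / (4 * a)))
          = ‖y i‖ ^ 2 + ∑ j, (if i = j then 0 else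
              (inner ℝ (y i) (y j) : ℝ) * Real.exp (-‖y i - y j‖ ^ 2 / (4 * a))) := by
        intro i
        have h1 : (‖y i‖ ^ 2 : ℝ)
            = ∑ j, (if i = j then (inner ℝ (y i) (y j) : ℝ)
                * Real.exp (-‖y i - y j‖ ^ 2 / (4 * a)) else 0) := by
          rw [Finset.sum_ite_eq]
          simp only [Finset.mem_univ, if_true, sub_self, norm_zero, ne_eq,
            OfNat.ofNat_ne_zero, not_false_eq_true, zero_pow, neg_zero, zero_div,
            Real.exp_zero, mul_one]
          exact (real_inner_self_eq_norm_sq _).symm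
        rw [h1, ← Finset.sum_add_distrib]
        apply Finset.sum_congr rfl
        intro j _
        by_cases h : i = j <;> simp [h]
      rw [Finset.sum_congr rfl (fun i _ => key i), Finset.sum_add_distrib, hnorm]
    have hap : (0 : ℝ) < a ^ p := Real.rpow_pos_of_pos ha p
    have ha1p : (0 : ℝ) < (a + 1) ^ p := Real.rpow_pos_of_pos ha1 p
    have ha2p : (0 : ℝ) < (2 * a + 1) ^ p := Real.rpow_pos_of_pos ha2 p
    have hπp : (0 : ℝ) < π ^ p := Real.rpow_pos_of_pos hπ p
    have e1 : (a / π) ^ p = a ^ p / π ^ p := Real.div_rpow ha.le hπ.le p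
    have e2 : (π / (a + 1)) ^ p = π ^ p / (a + 1) ^ p := Real.div_rpow hπ.le ha1.le p
    have e3 : (2 * π / (2 * a + 1)) ^ p = 2 ^ p * π ^ p / (2 * a + 1) ^ p := by
      rw [Real.div_rpow (by positivity) ha2.le, Real.mul_rpow (by norm_num) hπ.le]
    have e4 : (π / a) ^ p = π ^ p / a ^ p := Real.div_rpow hπ.le ha.le p
    have e5 : (a + 1) ^ (-p) = ((a + 1) ^ p)⁻¹ := Real.rpow_neg ha1.le p
    have e6 : (2 * a + 1) ^ (-p) = ((2 * a + 1) ^ p)⁻¹ := Real.rpow_neg ha2.le p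
    have e7 : a ^ (-p) = (a ^ p)⁻¹ := Real.rpow_neg ha.le p
    simp only [Tstat, ← hp, hA, hB, hC, e1, e2, e3, e4, e5, e6, e7, hS2]
    have hmul : ∀ i : Fin n, (∑ j, (if i = j then 0 else
        (inner ℝ (y i) (y j) : ℝ) * ((a ^ p)⁻¹ * Real.exp (-‖y i - y j‖ ^ 2 / (4 * a)))))
        = (a ^ p)⁻¹ * ∑ j, (if i = j then 0 else
        (inner ℝ (y i) (y j) : ℝ) * Real.exp (-‖y i - y j‖ ^ 2 / (4 * a))) := by
      intro i
      rw [Finset.mul_sum]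
      apply Finset.sum_congr rfl
      intro j _
      by_cases h : i = j
      · simp [h]
      · simp only [h, if_false]; ring
    rw [Finset.sum_congr rfl (fun i _ => hmul i), ← Finset.mul_sum]
    field_simp
    ring
  have hlim : Tendsto (fun a => A a - B a + C a) (nhdsWithin 0 (Set.Ioi 0))
      (nhds ((d : ℝ) / 2 -
        2 ^ (p + 1) * ((n : ℝ)⁻¹ * ∑ j, ‖y j‖ ^ 2 * Real.exp (-‖y j‖ ^ 2 / 2)))) := by
    have hAlim : Tendsto A (nhdsWithin 0 (Set.Ioi 0)) (nhds ((d : ℝ) / 2)) := by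
      have hcont : ContinuousAt A 0 := by
        apply ContinuousAt.mul
        · exact (ContinuousAt.rpow_const (by fun_prop) (Or.inl (by norm_num)))
        · exact ContinuousAt.div continuousAt_const (by fun_prop) (by norm_num)
      have h2 : Tendsto A (nhdsWithin 0 (Set.Ioi 0)) (nhds (A 0)) :=
        hcont.tendsto.mono_left nhdsWithin_le_nhds
      convert h2 using 2
      simp [hA, Real.one_rpow]
    have hBlim : Tendsto B (nhdsWithin 0 (Set.Ioi 0))
        (nhds (2 ^ (p + 1) * ((n : ℝ)⁻¹ * ∑ j, ‖y j‖ ^ 2 * Real.exp (-‖y j‖ ^ 2 / 2)))) := by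
      have hr : ContinuousAt (fun a : ℝ => (2 * a + 1) ^ (-p)) 0 :=
        ContinuousAt.rpow_const (by fun_prop) (Or.inl (by norm_num))
      have hterm : ∀ j : Fin n, ContinuousAt
          (fun a : ℝ => ‖y j‖ ^ 2 / (2 * a + 1) * Real.exp (-‖y j‖ ^ 2 / (4 * a + 2))) 0 :=
        fun j => (ContinuousAt.div continuousAt_const (by fun_prop) (by norm_num)).mul
          ((Real.continuous_exp.continuousAt).comp
            (ContinuousAt.div continuousAt_const (by fun_prop) (by norm_num)))
      have hsum : Tendsto
          (fun a : ℝ => ∑ j, ‖y j‖ ^ 2 / (2 * a + 1) * Real.exp (-‖y j‖ ^ 2 / (4 * a + 2)))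
          (nhds 0)
          (nhds (∑ j, ‖y j‖ ^ 2 / (2 * (0:ℝ) + 1) * Real.exp (-‖y j‖ ^ 2 / (4 * 0 + 2)))) :=
        tendsto_finset_sum _ fun j _ => (hterm j)
      have hcomb : Tendsto B (nhds 0)
          (nhds (2 ^ p * (2 * (0:ℝ) + 1) ^ (-p) * (2 / (n : ℝ)) *
            ∑ j, ‖y j‖ ^ 2 / (2 * (0:ℝ) + 1) * Real.exp (-‖y j‖ ^ 2 / (4 * 0 + 2)))) := by
        rw [hB]
        exact ((tendsto_const_nhds.mul hr.tendsto).mul tendsto_const_nhds).mul hsum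
      have h2 := hcomb.mono_left (nhdsWithin_le_nhds (s := Set.Ioi (0:ℝ)))
      convert h2 using 2
      norm_num [Real.one_rpow, Real.rpow_add (by norm_num : (0:ℝ) < 2), Real.rpow_one]
      ring
    have hClim : Tendsto C (nhdsWithin 0 (Set.Ioi 0)) (nhds 0) := by
      have hmain : Tendsto (fun a => ∑ i : Fin n, ∑ j : Fin n, (if i = j then 0 else
          (inner ℝ (y i) (y j) : ℝ) * (a ^ (-p) * Real.exp (-‖y i - y j‖ ^ 2 / (4 * a)))))
          (nhdsWithin 0 (Set.Ioi 0)) (nhds 0) := by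
        have h0 : (0 : ℝ) = ∑ _i : Fin n, ∑ _j : Fin n, (0 : ℝ) := by simp
        rw [h0]
        apply tendsto_finset_sum
        intro i _
        apply tendsto_finset_sum
        intro j _
        by_cases h : i = j
        · simp [h]
        · simp only [h, if_false]
          have hne : y i ≠ y j := fun hcon => h (hdistinct hcon)
          have hpos : (0 : ℝ) < ‖y i - y j‖ ^ 2 := by
            have h' : (0:ℝ) < ‖y i - y j‖ := norm_pos_iff.mpr (sub_ne_zero.mpr hne)
            positivity
          have := (aux_vanish (‖y i - y j‖ ^ 2) p hpos).const_mul ((inner ℝ (y i) (y j) : ℝ))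
          simpa using this
      have := hmain.const_mul (((n : ℝ) * n)⁻¹)
      simpa [hC] using this
    have := (hAlim.sub hBlim).add hClim
    simpa using this
  refine hlim.congr' ?_
  filter_upwards [self_mem_nhdsWithin] with a ha
  exact (heq a ha).symm
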